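/- Let f be a boolean function on n variables, and for each i ∈ [n] let g_i be a boolean function on m_i variables. Let F be the composed boolean function on the disjoint union of the variable sets, F(x_1, …, x_n) := f(g_1(x_1), …, g_n(x_n)). Fix an input X = (x_1, …, x_n) and set y := (g_1(x_1), …, g_n(x_n)). Then the minimal blocks of F at X are exactly the sets of the form ⋃_{i∈B} B_i, where B is a minimal block of f at y and, for each i ∈ B, B_i is a minimal block of g_i at x_i (with B_i regarded as a subset of the coordinates of the i-th input slot). -/

import Mathlib

open Filter

namespace BS

variable {I : Type*} [Fintype I] [DecidableEq I]

/-- Flip the bits of `x` indexed by `B`. -/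
def flipSet (x : I → Bool) (B : Finset I) : I → Bool :=
  fun i => if i ∈ B then !(x i) else x i

/-- `B` is a block of `f` at `x`. -/
def IsBlock (f : (I → Bool) → Bool) (x : I → Bool) (B : Finset I) : Prop :=
  f (flipSet x B) ≠ f x

/-- Block sensitivity of `f` at `x`: the maximum number of pairwise disjoint blocks. -/
noncomputable def bsAt (f : (I → Bool) → Bool) (x : I → Bool) : ℕ :=
  sSup {k | ∃ B : Fin k → Finset I, (∀ t, IsBlock f x (B t)) ∧
    ∀ t t', t ≠ t' → Disjoint (B t) (B t')}

/-- Block sensitivity of `f`. -/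
noncomputable def bs (f : (I → Bool) → Bool) : ℕ :=
  sSup {k | ∃ x, k = bsAt f x}

/-- `b`-block sensitivity of `f`. -/
noncomputable def bsb (f : (I → Bool) → Bool) (b : Bool) : ℕ :=
  sSup {k | ∃ x, f x = b ∧ k = bsAt f x}

/-- `M`-fold block sensitivity of `f` at `x`. -/
noncomputable def bsMAt (f : (I → Bool) → Bool) (M : ℕ) (x : I → Bool) : ℕ :=
  sSup {k | ∃ B : Fin k → Finset I, (∀ t, IsBlock f x (B t)) ∧
    ∀ i : I, (Finset.univ.filter (fun t => i ∈ B t)).card ≤ M}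

/-- `M`-fold `b`-block sensitivity of `f`. -/
noncomputable def bsMb (f : (I → Bool) → Bool) (M : ℕ) (b : Bool) : ℕ :=
  sSup {k | ∃ x, f x = b ∧ k = bsMAt f M x}

/-- Fractional block sensitivity of `f` at `x`. -/
noncomputable def fbsAt (f : (I → Bool) → Bool) (x : I → Bool) : ℝ :=
  sSup {s | ∃ lam : Finset I → ℝ, (∀ B, 0 ≤ lam B) ∧
    (∀ B, ¬ IsBlock f x B → lam B = 0) ∧
    (∀ i : I, ∑ B ∈ Finset.univ.filter (fun B : Finset I => i ∈ B), lam B ≤ 1) ∧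
    s = ∑ B : Finset I, lam B}

/-- Fractional block sensitivity of `f`. -/
noncomputable def fbs (f : (I → Bool) → Bool) : ℝ :=
  sSup {s | ∃ x, s = fbsAt f x}

/-- Fractional `b`-block sensitivity of `f`. -/
noncomputable def fbsb (f : (I → Bool) → Bool) (b : Bool) : ℝ :=
  sSup {s | ∃ x, f x = b ∧ s = fbsAt f x}

/-- Certificate complexity of `f` at `x`. -/
noncomputable def CAt (f : (I → Bool) → Bool) (x : I → Bool) : ℕ :=
  sInf {k | ∃ S : Finset I, (∀ B, IsBlock f x B → (S ∩ B).Nonempty) ∧ k = S.card}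

/-- Certificate complexity of `f`. -/
noncomputable def Cm (f : (I → Bool) → Bool) : ℕ :=
  sSup {k | ∃ x, k = CAt f x}

/-- `b`-certificate complexity of `f`. -/
noncomputable def Cb (f : (I → Bool) → Bool) (b : Bool) : ℕ :=
  sSup {k | ∃ x, f x = b ∧ k = CAt f x}

/-- Fractional certificate complexity of `f` at `x`. -/
noncomputable def fCAt (f : (I → Bool) → Bool) (x : I → Bool) : ℝ :=
  sInf {s | ∃ w : I → ℝ, (∀ i, 0 ≤ w i ∧ w i ≤ 1) ∧
    (∀ B, IsBlock f x B → 1 ≤ ∑ i ∈ B, w i) ∧ s = ∑ i, w i}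

/-- Fractional certificate complexity of `f`. -/
noncomputable def fC (f : (I → Bool) → Bool) : ℝ :=
  sSup {s | ∃ x, s = fCAt f x}

/-- Composition `f ∘ g` of boolean functions. -/
def comp {J : Type*} [Fintype J] [DecidableEq J]
    (f : (I → Bool) → Bool) (g : (J → Bool) → Bool) :
    ((I × J) → Bool) → Bool :=
  fun x => f (fun i => g (fun j => x (i, j)))

/-- `k`-fold iterated composition `f^(k)` of an `n`-variate boolean function; the
variables of `f^(k)` are indexed by strings in `Fin k → Fin n`.  `f^(0)` is the
univariate identity function. -/
def iter {n : ℕ} (f : (Fin n → Bool) → Bool) :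
    (k : ℕ) → ((Fin k → Fin n) → Bool) → Bool
  | 0, x => x (fun i => i.elim0)
  | k + 1, x => f (fun i => iter f k (fun s => x (Fin.cons i s)))

/-- Spectral radius of a real square matrix: the maximum of `|μ|` over the complex
eigenvalues `μ` of the matrix. -/
noncomputable def specRad {m : Type*} [Fintype m] [DecidableEq m]
    (A : Matrix m m ℝ) : ℝ :=
  sSup {r | ∃ μ : ℂ, μ ∈ spectrum ℂ (A.map Complex.ofReal) ∧ r = ‖μ‖}

end BS

namespace BS

/-- `B` is a minimal block of `f` at `x`: a block that is minimal under inclusion. -/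
def MinBlock {I : Type*} [Fintype I] [DecidableEq I]
    (f : (I → Bool) → Bool) (x : I → Bool) (B : Finset I) : Prop :=
  IsBlock f x B ∧ ∀ B' ⊆ B, IsBlock f x B' → B' = B

end BS

namespace BS

section CompAux

variable {n : ℕ} {m : Fin n → ℕ}

/-- The `i`-th slice of a set of composed coordinates. -/
def sl (S : Finset ((i : Fin n) × Fin (m i))) (i : Fin n) : Finset (Fin (m i)) :=
  Finset.univ.filter (fun j => (⟨i, j⟩ : (i : Fin n) × Fin (m i)) ∈ S)

lemma mem_sl {S : Finset ((i : Fin n) × Fin (m i))} {i : Fin n} {j : Fin (m i)} :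
    j ∈ sl S i ↔ ⟨i, j⟩ ∈ S := by simp [sl]

lemma sigma_sl (S : Finset ((i : Fin n) × Fin (m i))) :
    Finset.univ.sigma (sl S) = S := by
  ext ⟨i, j⟩; simp [Finset.mem_sigma, mem_sl]

lemma sl_sigma (A : Finset (Fin n)) (D : (i : Fin n) → Finset (Fin (m i))) (i : Fin n) :
    sl (A.sigma D) i = if i ∈ A then D i else ∅ := by
  ext j
  by_cases h : i ∈ A <;> simp [mem_sl, Finset.mem_sigma, h]

lemma sl_subset {S S' : Finset ((i : Fin n) × Fin (m i))} (h : S ⊆ S') (i : Fin n) :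
    sl S i ⊆ sl S' i := fun _ hj => mem_sl.2 (h (mem_sl.1 hj))

lemma subset_of_sl {S S' : Finset ((i : Fin n) × Fin (m i))}
    (h : ∀ i, sl S i ⊆ sl S' i) : S ⊆ S' := by
  intro p hp
  exact mem_sl.1 (h p.1 (mem_sl.2 hp))

lemma not_isBlock_empty {I : Type*} [Fintype I] [DecidableEq I]
    (f : (I → Bool) → Bool) (x : I → Bool) :
    ¬ IsBlock f x (∅ : Finset I) := by
  have h : flipSet x ∅ = x := by funext i; simp [flipSet]
  simp [IsBlock, h]

lemma flip_slice (X : ((i : Fin n) × Fin (m i)) → Bool)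
    (S : Finset ((i : Fin n) × Fin (m i))) (i : Fin n) :
    (fun j => flipSet X S ⟨i, j⟩) = flipSet (fun j => X ⟨i, j⟩) (sl S i) := by
  funext j; simp [flipSet, mem_sl]

open Classical in
/-- The set of slots whose slice is a block. -/
noncomputable def Tb (g : (i : Fin n) → ((Fin (m i) → Bool) → Bool))
    (X : ((i : Fin n) × Fin (m i)) → Bool)
    (S : Finset ((i : Fin n) × Fin (m i))) : Finset (Fin n) :=
  Finset.univ.filter (fun i => IsBlock (g i) (fun j => X ⟨i, j⟩) (sl S i))

lemma mem_Tb {g : (i : Fin n) → ((Fin (m i) → Bool) → Bool)}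
    {X : ((i : Fin n) × Fin (m i)) → Bool}
    {S : Finset ((i : Fin n) × Fin (m i))} {i : Fin n} :
    i ∈ Tb g X S ↔ IsBlock (g i) (fun j => X ⟨i, j⟩) (sl S i) := by
  simp [Tb]

open Classical in
lemma g_flip {I : Type*} [Fintype I] [DecidableEq I]
    (h : (I → Bool) → Bool) (x : I → Bool) (C : Finset I) :
    h (flipSet x C) = if IsBlock h x C then !(h x) else h x := by
  by_cases hb : IsBlock h x C
  · rw [if_pos hb]
    cases e1 : h (flipSet x C) <;> cases e2 : h x <;> simp_all [IsBlock]
  · rw [if_neg hb]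
    simpa [IsBlock, not_not] using hb

lemma comp_flip (f : (Fin n → Bool) → Bool)
    (g : (i : Fin n) → ((Fin (m i) → Bool) → Bool))
    (X : ((i : Fin n) × Fin (m i)) → Bool)
    (S : Finset ((i : Fin n) × Fin (m i))) :
    f (fun i => g i (fun j => flipSet X S ⟨i, j⟩)) =
      f (flipSet (fun i => g i (fun j => X ⟨i, j⟩)) (Tb g X S)) := by
  congr 1
  funext i
  rw [flip_slice, g_flip (g i) (fun j => X ⟨i, j⟩) (sl S i)]
  by_cases hb : IsBlock (g i) (fun j => X ⟨i, j⟩) (sl S i)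
  · simp [flipSet, mem_Tb.2 hb, hb]
  · have : i ∉ Tb g X S := fun hc => hb (mem_Tb.1 hc)
    simp [flipSet, hb, this]

lemma isBlock_comp (f : (Fin n → Bool) → Bool)
    (g : (i : Fin n) → ((Fin (m i) → Bool) → Bool))
    (X : ((i : Fin n) × Fin (m i)) → Bool)
    (S : Finset ((i : Fin n) × Fin (m i))) :
    IsBlock (fun x : ((i : Fin n) × Fin (m i)) → Bool =>
        f (fun i => g i (fun j => x ⟨i, j⟩))) X S ↔
      IsBlock f (fun i => g i (fun j => X ⟨i, j⟩)) (Tb g X S) := by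
  show f (fun i => g i (fun j => flipSet X S ⟨i, j⟩)) ≠
      f (fun i => g i (fun j => X ⟨i, j⟩)) ↔ _
  rw [comp_flip f g X S]
  rfl

end CompAux

end BS

open BS in
/-- Let `F(x₁,…,xₙ) = f(g₁(x₁),…,gₙ(xₙ))` be the composition of `f`
with functions `gᵢ` on disjoint variable sets, and fix an input `X` with
`y := (g₁(x₁),…,gₙ(xₙ))`.  Then the minimal blocks of `F` at `X` are exactly the sets
`⋃_{i ∈ B} {i} × Bᵢ` where `B` is a minimal block of `f` at `y` and, for `i ∈ B`,
`Bᵢ` is a minimal block of `gᵢ` at `xᵢ`. -/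
theorem minBlock_comp (n : ℕ) (m : Fin n → ℕ) (f : (Fin n → Bool) → Bool)
    (g : (i : Fin n) → ((Fin (m i) → Bool) → Bool))
    (X : ((i : Fin n) × Fin (m i)) → Bool) :
    ∀ S : Finset ((i : Fin n) × Fin (m i)),
      MinBlock (fun x : ((i : Fin n) × Fin (m i)) → Bool =>
          f (fun i => g i (fun j => x ⟨i, j⟩))) X S ↔
        ∃ (B : Finset (Fin n)) (Bi : (i : Fin n) → Finset (Fin (m i))),
          MinBlock f (fun i => g i (fun j => X ⟨i, j⟩)) B ∧
          (∀ i ∈ B, MinBlock (g i) (fun j => X ⟨i, j⟩) (Bi i)) ∧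
          S = B.sigma (fun i => Bi i) := by
  intro S
  classical
  constructor
  · rintro ⟨hSb, hSmin⟩
    have hTb : IsBlock f (fun i => g i (fun j => X ⟨i, j⟩)) (Tb g X S) :=
      (isBlock_comp f g X S).1 hSb
    -- every coordinate of S lies in a slot whose slice is a block
    have hfull : ∀ p ∈ S, p.1 ∈ Tb g X S := by
      intro p hp
      by_contra hni
      set S' := Finset.univ.sigma (Function.update (sl S) p.1 ∅) with hS'
      have hslS' : ∀ i, sl S' i = Function.update (sl S) p.1 ∅ i := by
        intro i
        rw [hS', sl_sigma, if_pos (Finset.mem_univ i)]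
      have hsub : S' ⊆ S := by
        refine subset_of_sl fun i => ?_
        rw [hslS']
        by_cases h : i = p.1
        · subst h; simp
        · rw [Function.update_of_ne h]
      have hT' : Tb g X S' = Tb g X S := by
        ext i
        rw [mem_Tb, mem_Tb, hslS']
        by_cases h : i = p.1
        · subst h
          rw [Function.update_self]
          constructor
          · intro h'; exact absurd h' (not_isBlock_empty _ _)
          · intro h'; exact absurd (mem_Tb.2 h') hni
        · rw [Function.update_of_ne h]
      have hb' : IsBlock (fun x : ((i : Fin n) × Fin (m i)) → Bool =>
          f (fun i => g i (fun j => x ⟨i, j⟩))) X S' := by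
        rw [isBlock_comp, hT']; exact hTb
      have hSS : S' = S := hSmin S' hsub hb'
      have hpS' : p ∈ S' := hSS ▸ hp
      have hmem : p.2 ∈ sl S' p.1 := mem_sl.2 hpS'
      rw [hslS', Function.update_self] at hmem
      exact absurd hmem (Finset.notMem_empty _)
    refine ⟨Tb g X S, sl S, ⟨hTb, ?_⟩, ?_, ?_⟩
    · -- minimality of Tb g X S
      intro B' hB'sub hB'
      set S' := Finset.univ.sigma (fun i => if i ∈ B' then sl S i else ∅) with hS'
      have hslS' : ∀ i, sl S' i = if i ∈ B' then sl S i else ∅ := by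
        intro i
        rw [hS', sl_sigma, if_pos (Finset.mem_univ i)]
      have hsub : S' ⊆ S := by
        refine subset_of_sl fun i => ?_
        rw [hslS']
        split <;> simp
      have hT' : Tb g X S' = B' := by
        ext i
        rw [mem_Tb, hslS']
        by_cases h : i ∈ B'
        · rw [if_pos h]
          exact ⟨fun _ => h, fun _ => mem_Tb.1 (hB'sub h)⟩
        · rw [if_neg h]
          exact ⟨fun hc => absurd hc (not_isBlock_empty _ _), fun hc => absurd hc h⟩
      have hb' : IsBlock (fun x : ((i : Fin n) × Fin (m i)) → Bool =>
          f (fun i => g i (fun j => x ⟨i, j⟩))) X S' := by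
        rw [isBlock_comp, hT']; exact hB'
      have hSS : S' = S := hSmin S' hsub hb'
      rw [← hSS, hT']
    · -- each slice is a minimal block
      intro i hi
      refine ⟨mem_Tb.1 hi, ?_⟩
      intro C hCsub hC
      set S' := Finset.univ.sigma (Function.update (sl S) i C) with hS'
      have hslS' : ∀ i', sl S' i' = Function.update (sl S) i C i' := by
        intro i'
        rw [hS', sl_sigma, if_pos (Finset.mem_univ i')]
      have hsub : S' ⊆ S := by
        refine subset_of_sl fun i' => ?_
        rw [hslS']
        by_cases h : i' = i
        · subst h; rw [Function.update_self]; exact hCsub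
        · rw [Function.update_of_ne h]
      have hT' : Tb g X S' = Tb g X S := by
        ext i'
        rw [mem_Tb, mem_Tb, hslS']
        by_cases h : i' = i
        · subst h
          rw [Function.update_self]
          exact ⟨fun _ => mem_Tb.1 hi, fun _ => hC⟩
        · rw [Function.update_of_ne h]
      have hb' : IsBlock (fun x : ((i : Fin n) × Fin (m i)) → Bool =>
          f (fun i => g i (fun j => x ⟨i, j⟩))) X S' := by
        rw [isBlock_comp, hT']; exact hTb
      have hSS : S' = S := hSmin S' hsub hb'
      have h2 : sl S' i = sl S i := by rw [hSS]
      rw [hslS', Function.update_self] at h2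
      exact h2
    · -- S is the sigma of its slices over Tb
      ext ⟨i, j⟩
      rw [Finset.mem_sigma]
      constructor
      · intro h; exact ⟨hfull ⟨i, j⟩ h, mem_sl.2 h⟩
      · rintro ⟨-, h2⟩; exact mem_sl.1 h2
  · rintro ⟨B, Bi, ⟨hBb, hBmin⟩, hBi, rfl⟩
    have hsl : ∀ i, sl (B.sigma (fun i => Bi i)) i = if i ∈ B then Bi i else ∅ :=
      sl_sigma B _
    have hT : Tb g X (B.sigma (fun i => Bi i)) = B := by
      ext i
      rw [mem_Tb, hsl]
      by_cases h : i ∈ B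
      · rw [if_pos h]
        exact ⟨fun _ => h, fun _ => (hBi i h).1⟩
      · rw [if_neg h]
        exact ⟨fun hc => absurd hc (not_isBlock_empty _ _), fun hc => absurd hc h⟩
    constructor
    · rw [isBlock_comp, hT]; exact hBb
    · intro S' hsub hb'
      have hT'sub : Tb g X S' ⊆ B := by
        intro i hi
        by_contra h
        have h1 : sl S' i ⊆ sl (B.sigma (fun i => Bi i)) i := sl_subset hsub i
        rw [hsl, if_neg h] at h1
        have h2 : sl S' i = ∅ := Finset.subset_empty.1 h1
        exact not_isBlock_empty _ _ (h2 ▸ mem_Tb.1 hi)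
      have hTeq : Tb g X S' = B := hBmin _ hT'sub ((isBlock_comp f g X S').1 hb')
      have hsl' : ∀ i, sl S' i = sl (B.sigma (fun i => Bi i)) i := by
        intro i
        rw [hsl]
        by_cases h : i ∈ B
        · rw [if_pos h]
          refine (hBi i h).2 (sl S' i) ?_ ?_
          · have h1 := sl_subset hsub i
            rwa [hsl, if_pos h] at h1
          · exact mem_Tb.1 (show i ∈ Tb g X S' from hTeq ▸ h)
        · rw [if_neg h]
          have h1 := sl_subset hsub i
          rw [hsl, if_neg h] at h1
          exact Finset.subset_empty.1 h1
      have : sl S' = sl (B.sigma (fun i => Bi i)) := funext hsl'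
      rw [← sigma_sl S', ← sigma_sl (B.sigma (fun i => Bi i)), this]
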